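/- For every σ ∈ S_n, Σ_{w ∈ R(σ)} d_C^{G(σ)}(w) = Σ_{i ∈ Des(σ)} Σ_{u ∈ R(σ·s_i)} d_C^{G(σ·s_i)}(u) + 2·Σ_{{i,j} ⊆ Des(σ), j−i>1} |R(σ·s_i·s_j)|, where on the right-hand side d_C^{G(σ·s_i)}(u) is the commutation degree of u computed in the graph G(σ·s_i), and the last sum ranges over unordered pairs of descents of σ that differ by more than 1. -/

import Mathlib

namespace RW

/-- The simple transposition `s i = (i, i+1)`, acting on `ℕ` (points are `1, …, n`;
the point `0` is unused, matching the paper's 1-indexed conventions). -/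
def s (i : ℕ) : Equiv.Perm ℕ := Equiv.swap i (i + 1)

/-- The product `s i₁ * s i₂ * ⋯ * s iₗ` of the word `w = [i₁, …, iₗ]`. -/
def π (w : List ℕ) : Equiv.Perm ℕ := (w.map s).prod

/-- The copy of the symmetric group `S_n` inside `Equiv.Perm ℕ`: permutations of
`{1, …, n}`, i.e. fixing `0` and every point `> n`. -/
def Sn (n : ℕ) : Set (Equiv.Perm ℕ) := {σ | ∀ m : ℕ, (m = 0 ∨ n < m) → σ m = m}

/-- The length `ℓ(σ)`: the number of inversions of `σ`. -/
noncomputable def len (σ : Equiv.Perm ℕ) : ℕ :=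
  Nat.card {p : ℕ × ℕ // p.1 < p.2 ∧ σ p.2 < σ p.1}

/-- `w` is a reduced word for `σ`: its product is `σ` and its length is `ℓ(σ)`. -/
def Reduced (σ : Equiv.Perm ℕ) (w : List ℕ) : Prop :=
  π w = σ ∧ w.length = len σ

/-- `R σ`: the set of reduced words of `σ`. -/
def R (σ : Equiv.Perm ℕ) : Set (List ℕ) := {w | Reduced σ w}

/-- The descent set `Des σ = {i ≥ 1 | σ(i) > σ(i+1)}`. -/
def Des (σ : Equiv.Perm ℕ) : Set ℕ := {i | 1 ≤ i ∧ σ (i + 1) < σ i}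

/-- A single commutation move: swap two adjacent letters `a, b` with `|a - b| > 1`. -/
def CommMove (w w' : List ℕ) : Prop :=
  ∃ u v : List ℕ, ∃ a b : ℕ, 1 < ((a : ℤ) - (b : ℤ)).natAbs ∧
    w = u ++ a :: b :: v ∧ w' = u ++ b :: a :: v

/-- A single braid move: replace consecutive letters `(a, a+1, a)` by `(a+1, a, a+1)`
or vice versa. -/
def BraidMove (w w' : List ℕ) : Prop :=
  ∃ u v : List ℕ, ∃ a : ℕ,
    (w = u ++ a :: (a+1) :: a :: v ∧ w' = u ++ (a+1) :: a :: (a+1) :: v) ∨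
    (w = u ++ (a+1) :: a :: (a+1) :: v ∧ w' = u ++ a :: (a+1) :: a :: v)

/-- The braid degree of a word: the number of words obtainable from it by a single
braid move.  (For `w ∈ R σ` these are exactly the braid-edge neighbours of `w` in
`G(σ)`, since a braid move sends reduced words of `σ` to reduced words of `σ`.) -/
noncomputable def dB (w : List ℕ) : ℕ := Nat.card {w' : List ℕ // BraidMove w w'}

/-- The commutation degree of a word: the number of words obtainable from it by a
single commutation move. -/
noncomputable def dC (w : List ℕ) : ℕ := Nat.card {w' : List ℕ // CommMove w w'}

/-- The number `|B(σ)|` of braid classes: classes of `R σ` under the equivalence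
generated by single braid moves. -/
noncomputable def nB (σ : Equiv.Perm ℕ) : ℕ :=
  Nat.card (Quot (fun w w' : R σ => BraidMove w.1 w'.1))

/-- The number `|C(σ)|` of commutation classes. -/
noncomputable def nC (σ : Equiv.Perm ℕ) : ℕ :=
  Nat.card (Quot (fun w w' : R σ => CommMove w.1 w'.1))

/-- The underlying function of `w₀^{(k,i)}`: reverse the interval `{i, …, i+k-1}`. -/
def w0fun (k i : ℕ) : ℕ → ℕ := fun m => if i ≤ m ∧ m < i + k then i + (i + k - 1) - m else m

theorem w0fun_involutive (k i : ℕ) : Function.Involutive (w0fun k i) := by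
  intro m
  unfold w0fun
  split_ifs <;> omega

/-- `w₀^{(k,i)}`: the permutation fixing every point outside `{i, …, i+k-1}` and
reversing that interval. -/
def w0 (k i : ℕ) : Equiv.Perm ℕ := (w0fun_involutive k i).toPerm

/-- Right weak order: `τ ≤ σ` iff `ℓ(τ) + ℓ(τ⁻¹σ) = ℓ(σ)`. -/
def wle (τ σ : Equiv.Perm ℕ) : Prop := len τ + len (τ⁻¹ * σ) = len σ

/-- The support of `σ`: the letters appearing in some reduced word of `σ`. -/
def supp (σ : Equiv.Perm ℕ) : Set ℕ := {a | ∃ w, Reduced σ w ∧ a ∈ w}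

-- ============ basic s lemmas ============

lemma s_mul_self (i : ℕ) : s i * s i = 1 := by
  simp [s, Equiv.swap_mul_self]

lemma s_apply (i m : ℕ) : s i m = if m = i then i + 1 else if m = i + 1 then i else m := by
  simp [s, Equiv.swap_apply_def]

lemma s_invol (i : ℕ) : ∀ m, s i (s i m) = m := by
  intro m; simp [s_apply]; split_ifs <;> omega

-- ============ invSet ============

def invSet (σ : Equiv.Perm ℕ) : Set (ℕ × ℕ) := {p | p.1 < p.2 ∧ σ p.2 < σ p.1}

lemma len_eq_ncard (σ : Equiv.Perm ℕ) : len σ = (invSet σ).ncard := by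
  rw [← Nat.card_coe_set_eq]; rfl

def fmap (i : ℕ) : ℕ × ℕ → ℕ × ℕ := fun p => (s i p.1, s i p.2)

lemma fmap_invol (i : ℕ) : ∀ p, fmap i (fmap i p) = p := by
  intro p; simp [fmap, s_invol]

lemma fmap_inj (i : ℕ) : Function.Injective (fmap i) :=
  Function.Involutive.injective (fmap_invol i)

lemma fmap_order {i : ℕ} {p : ℕ × ℕ} (h : p.1 < p.2) (hne : p ≠ (i, i + 1)) :
    (fmap i p).1 < (fmap i p).2 := by
  have : p.1 ≠ i ∨ p.2 ≠ i + 1 := by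
    by_contra hc; push_neg at hc; exact hne (Prod.ext hc.1 hc.2)
  simp only [fmap, s_apply]
  split_ifs <;> omega

lemma fmap_ne {i : ℕ} {p : ℕ × ℕ} (h : p.1 < p.2) : fmap i p ≠ (i, i + 1) := by
  intro hc
  have h1 : s i p.1 = i := congrArg Prod.fst hc
  have h2 : s i p.2 = i + 1 := congrArg Prod.snd hc
  simp only [s_apply] at h1 h2
  split_ifs at h1 h2 <;> omega

lemma invSet_mul_s_of_desc {σ : Equiv.Perm ℕ} {i : ℕ} (h : σ (i + 1) < σ i) :
    invSet (σ * s i) = fmap i '' (invSet σ \ {(i, i + 1)}) := by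
  ext p
  constructor
  · rintro ⟨hlt, hinv⟩
    have hpne : p ≠ (i, i + 1) := by
      rintro rfl
      simp only [Equiv.Perm.mul_apply] at hinv
      have h1 : s i i = i + 1 := by simp [s_apply]
      have h2 : s i (i + 1) = i := by simp [s_apply]
      rw [h1, h2] at hinv
      exact absurd hinv (not_lt.2 (le_of_lt h))
    refine ⟨fmap i p, ⟨⟨fmap_order hlt hpne, ?_⟩, fmap_ne hlt⟩, fmap_invol i p⟩
    simpa [fmap, Equiv.Perm.mul_apply] using hinv
  · rintro ⟨q, ⟨⟨hq1, hq2⟩, hqne⟩, rfl⟩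
    have : q ≠ (i, i + 1) := by simpa using hqne
    refine ⟨fmap_order hq1 this, ?_⟩
    simpa [fmap, Equiv.Perm.mul_apply, s_invol] using hq2

lemma invSet_mul_s_of_asc {σ : Equiv.Perm ℕ} {i : ℕ} (h : σ i < σ (i + 1)) :
    invSet (σ * s i) = insert (i, i + 1) (fmap i '' invSet σ) := by
  ext p
  constructor
  · rintro ⟨hlt, hinv⟩
    by_cases hpne : p = (i, i + 1)
    · exact Or.inl hpne
    · refine Or.inr ⟨fmap i p, ⟨fmap_order hlt hpne, ?_⟩, fmap_invol i p⟩
      simpa [fmap, Equiv.Perm.mul_apply] using hinv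
  · rintro (rfl | ⟨q, ⟨hq1, hq2⟩, rfl⟩)
    · refine ⟨by omega, ?_⟩
      have h1 : s i i = i + 1 := by simp [s_apply]
      have h2 : s i (i + 1) = i := by simp [s_apply]
      simpa [Equiv.Perm.mul_apply, h1, h2] using h
    · have hqne : q ≠ (i, i + 1) := by
        rintro rfl
        simp only [invSet, Set.mem_setOf_eq] at hq2
        exact absurd hq2 (not_lt.2 (le_of_lt h))
      refine ⟨fmap_order hq1 hqne, ?_⟩
      simpa [fmap, Equiv.Perm.mul_apply, s_invol] using hq2

lemma len_mul_s_of_desc {σ : Equiv.Perm ℕ} {i : ℕ} (hfin : (invSet σ).Finite)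
    (h : σ (i + 1) < σ i) :
    (invSet (σ * s i)).Finite ∧ len (σ * s i) + 1 = len σ := by
  rw [invSet_mul_s_of_desc h] at *
  refine ⟨(hfin.diff).image _, ?_⟩
  rw [len_eq_ncard, len_eq_ncard, invSet_mul_s_of_desc h,
    Set.ncard_image_of_injective _ (fmap_inj i)]
  exact Set.ncard_diff_singleton_add_one ⟨by omega, h⟩ hfin

lemma len_mul_s_of_asc {σ : Equiv.Perm ℕ} {i : ℕ} (hfin : (invSet σ).Finite)
    (h : σ i < σ (i + 1)) :
    (invSet (σ * s i)).Finite ∧ len (σ * s i) = len σ + 1 := by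
  have hnm : (i, i + 1) ∉ fmap i '' invSet σ := by
    rintro ⟨q, hq, hqe⟩
    exact fmap_ne hq.1 hqe
  constructor
  · rw [invSet_mul_s_of_asc h]
    exact ((hfin.image _).insert _)
  · rw [len_eq_ncard, len_eq_ncard, invSet_mul_s_of_asc h,
      Set.ncard_insert_of_notMem hnm (hfin.image _),
      Set.ncard_image_of_injective _ (fmap_inj i)]


-- ============ π and reduced words ============

lemma pi_nil : π ([] : List ℕ) = 1 := rfl

lemma pi_append (u v : List ℕ) : π (u ++ v) = π u * π v := by
  simp [π, List.map_append, List.prod_append]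

lemma pi_concat (u : List ℕ) (i : ℕ) : π (u ++ [i]) = π u * s i := by
  rw [pi_append]; simp [π]

lemma invSet_one : invSet (1 : Equiv.Perm ℕ) = ∅ := by
  ext p; simp [invSet]; omega

lemma len_one : len (1 : Equiv.Perm ℕ) = 0 := by
  rw [len_eq_ncard, invSet_one, Set.ncard_empty]

lemma ne_imp_s_net {σ : Equiv.Perm ℕ} (i : ℕ) : σ i ≠ σ (i + 1) := by
  intro h; exact absurd (σ.injective h) (by omega)

lemma len_mul_s {σ : Equiv.Perm ℕ} (i : ℕ) (hfin : (invSet σ).Finite) :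
    (invSet (σ * s i)).Finite ∧
      (len (σ * s i) + 1 = len σ ∨ len (σ * s i) = len σ + 1) := by
  rcases lt_or_gt_of_ne (ne_imp_s_net (σ := σ) i) with h | h
  · exact ⟨(len_mul_s_of_asc hfin h).1, Or.inr (len_mul_s_of_asc hfin h).2⟩
  · exact ⟨(len_mul_s_of_desc hfin h).1, Or.inl (len_mul_s_of_desc hfin h).2⟩

lemma invSet_pi_finite (w : List ℕ) : (invSet (π w)).Finite := by
  induction w using List.reverseRecOn with
  | nil => rw [pi_nil, invSet_one]; exact Set.finite_empty
  | append_singleton u i ih => rw [pi_concat]; exact (len_mul_s i ih).1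

lemma len_pi_le (w : List ℕ) : len (π w) ≤ w.length := by
  induction w using List.reverseRecOn with
  | nil => simp [pi_nil, len_one]
  | append_singleton u i ih =>
    rw [pi_concat]
    rcases (len_mul_s i (invSet_pi_finite u)).2 with h | h <;>
      simp [List.length_append] <;> omega

lemma reduced_append_iff {σ : Equiv.Perm ℕ} (hfin : (invSet σ).Finite) (u : List ℕ) (i : ℕ) :
    Reduced σ (u ++ [i]) ↔ Reduced (σ * s i) u ∧ σ (i + 1) < σ i := by
  constructor
  · rintro ⟨hp, hl⟩
    rw [pi_concat] at hp
    have hu : π u = σ * s i := by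
      rw [← hp, mul_assoc, s_mul_self, mul_one]
    rw [List.length_append] at hl
    simp only [List.length_singleton] at hl
    have hle := len_pi_le u
    rw [hu] at hle
    rcases lt_or_gt_of_ne (ne_imp_s_net (σ := σ) i) with h | h
    · exact absurd ((len_mul_s_of_asc hfin h).2) (by omega)
    · have hd := (len_mul_s_of_desc hfin h).2
      exact ⟨⟨hu, by omega⟩, h⟩
  · rintro ⟨⟨hp, hl⟩, h⟩
    have hd := (len_mul_s_of_desc hfin h).2
    refine ⟨?_, ?_⟩
    · rw [pi_concat, hp, mul_assoc, s_mul_self, mul_one]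
    · rw [List.length_append]; simp only [List.length_singleton]; omega

-- ============ finite support FS ============

def FS (σ : Equiv.Perm ℕ) : Prop := ∃ n, σ ∈ Sn n

lemma FS_one : FS 1 := ⟨0, fun m _ => rfl⟩

lemma Sn_mono {σ : Equiv.Perm ℕ} {n m : ℕ} (h : n ≤ m) (hσ : σ ∈ Sn n) : σ ∈ Sn m := by
  intro k hk; exact hσ k (by omega)

lemma Sn_mul {σ τ : Equiv.Perm ℕ} {n : ℕ} (hσ : σ ∈ Sn n) (hτ : τ ∈ Sn n) :
    σ * τ ∈ Sn n := by
  intro m hm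
  simp only [Equiv.Perm.mul_apply]
  rw [hτ m hm, hσ m hm]

lemma s_mem_Sn {i : ℕ} (hi : 1 ≤ i) : s i ∈ Sn (i + 1) := by
  intro m hm
  rw [s_apply]
  rcases hm with h | h <;> (split_ifs <;> omega)

lemma FS_mul_s {σ : Equiv.Perm ℕ} (h : FS σ) {i : ℕ} (hi : 1 ≤ i) : FS (σ * s i) := by
  obtain ⟨n, hn⟩ := h
  exact ⟨max n (i + 1), Sn_mul (Sn_mono (le_max_left _ _) hn)
    (Sn_mono (le_max_right _ _) (s_mem_Sn hi))⟩

lemma Sn_zero {σ : Equiv.Perm ℕ} {n : ℕ} (hσ : σ ∈ Sn n) : σ 0 = 0 :=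
  hσ 0 (Or.inl rfl)

lemma FS_zero {σ : Equiv.Perm ℕ} (h : FS σ) : σ 0 = 0 := by
  obtain ⟨n, hn⟩ := h; exact Sn_zero hn

lemma desc_pos {σ : Equiv.Perm ℕ} (h : FS σ) {i : ℕ} (hd : σ (i + 1) < σ i) : 1 ≤ i := by
  rcases Nat.eq_zero_or_pos i with rfl | hp
  · rw [FS_zero h] at hd; omega
  · exact hp

lemma Sn_maps {σ : Equiv.Perm ℕ} {n : ℕ} (hσ : σ ∈ Sn n) {m : ℕ} (hm : m ≤ n) : σ m ≤ n := by
  by_contra hc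
  push_neg at hc
  have := hσ (σ m) (Or.inr hc)
  have := σ.injective this
  omega

lemma invSet_finite_of_Sn {σ : Equiv.Perm ℕ} {n : ℕ} (hσ : σ ∈ Sn n) :
    (invSet σ).Finite := by
  apply Set.Finite.subset (Set.finite_Icc (0, 0) (n, n))
  rintro ⟨a, b⟩ ⟨h1, h2⟩
  change a < b at h1
  change σ b < σ a at h2
  simp only [Set.mem_Icc, Prod.mk_le_mk]
  constructor
  · exact ⟨Nat.zero_le _, Nat.zero_le _⟩
  have hb : b ≤ n := by
    by_contra hc
    push_neg at hc
    rw [hσ b (Or.inr hc)] at h2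
    have ha : σ a ≤ n ∨ σ a = a := by
      by_cases h : a ≤ n
      · exact Or.inl (Sn_maps hσ h)
      · exact Or.inr (hσ a (Or.inr (by omega)))
    rcases ha with h | h <;> omega
  exact ⟨by omega, hb⟩

lemma FS_invSet_finite {σ : Equiv.Perm ℕ} (h : FS σ) : (invSet σ).Finite := by
  obtain ⟨n, hn⟩ := h; exact invSet_finite_of_Sn hn

lemma eq_one_of_len_zero {σ : Equiv.Perm ℕ} (h : FS σ) (hl : len σ = 0) : σ = 1 := by
  have hfin := FS_invSet_finite h
  rw [len_eq_ncard] at hl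
  have hempty : invSet σ = ∅ := (Set.ncard_eq_zero hfin).1 hl
  have hmono : StrictMono σ := by
    intro a b hab
    have : ¬(σ b < σ a) := by
      intro hc
      have : (a, b) ∈ invSet σ := ⟨hab, hc⟩
      rw [hempty] at this; exact this
    have : σ a ≠ σ b := fun he => absurd (σ.injective he) (by omega)
    omega
  ext m
  have h1 : m ≤ σ m := hmono.le_apply
  have hmono' : StrictMono σ.symm := by
    intro a b hab
    have := hmono.lt_iff_lt (a := σ.symm a) (b := σ.symm b)
    simp at this
    omega
  have h2 : m ≤ σ.symm m := hmono'.le_apply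
  have h3 : σ.symm (σ m) = m := σ.symm_apply_apply m
  simp only [Equiv.Perm.one_apply]
  have := hmono'.le_iff_le (a := σ m) (b := m)
  omega

-- ============ R basic ============

lemma R_one : R 1 = {([] : List ℕ)} := by
  ext w
  simp only [R, Reduced, Set.mem_setOf_eq, Set.mem_singleton_iff, len_one,
    List.length_eq_zero_iff]
  constructor
  · rintro ⟨_, h⟩; exact h
  · rintro rfl; exact ⟨rfl, rfl⟩

lemma letters_bound {n : ℕ} : ∀ w : List ℕ, ∀ σ : Equiv.Perm ℕ, σ ∈ Sn n →
    Reduced σ w → ∀ a ∈ w, 1 ≤ a ∧ a + 1 ≤ n := by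
  intro w
  induction w using List.reverseRecOn with
  | nil => intro σ _ _ a ha; simp at ha
  | append_singleton u i ih =>
    intro σ hσ hred a ha
    obtain ⟨hu, hd⟩ := (reduced_append_iff (invSet_finite_of_Sn hσ) u i).1 hred
    have hi1 : 1 ≤ i := desc_pos ⟨n, hσ⟩ hd
    have hin : i + 1 ≤ n := by
      by_contra hc
      push_neg at hc
      rcases Nat.lt_or_ge n i with h | h
      · rw [hσ i (Or.inr h), hσ (i + 1) (Or.inr (by omega))] at hd; omega
      · have hi : i = n := by omega
        subst hi
        have h1 : σ (i + 1) = i + 1 := hσ (i + 1) (Or.inr (by omega))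
        have h2 : σ i ≤ i := Sn_maps hσ le_rfl
        omega
    have hmem : σ * s i ∈ Sn n := Sn_mul hσ (Sn_mono hin (s_mem_Sn hi1))
    rcases List.mem_append.1 ha with h | h
    · exact ih (σ * s i) hmem hu a h
    · simp at h; subst h; exact ⟨hi1, hin⟩

lemma R_finite {σ : Equiv.Perm ℕ} (h : FS σ) : (R σ).Finite := by
  obtain ⟨n, hn⟩ := h
  have hsub : R σ ⊆ (List.map (Fin.val (n := n + 1))) ''
      {l : List (Fin (n + 1)) | l.length = len σ} := by
    intro w hw
    have hb := letters_bound w σ hn hw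
    refine ⟨w.pmap (fun a ha => (⟨a, ha⟩ : Fin (n + 1))) (fun a ha => by
      have := hb a ha; omega), ?_, ?_⟩
    · simp only [Set.mem_setOf_eq, List.length_pmap]; exact hw.2
    · simp [List.map_pmap, List.pmap_eq_map]
  exact Set.Finite.subset ((List.finite_length_eq _ _).image _) hsub

lemma Des_sub {σ : Equiv.Perm ℕ} {n : ℕ} (hσ : σ ∈ Sn n) : Des σ ⊆ Set.Iic n := by
  intro i ⟨hi1, hd⟩
  by_contra hc
  simp only [Set.mem_Iic] at hc
  push_neg at hc
  rw [hσ i (Or.inr hc), hσ (i + 1) (Or.inr (by omega))] at hd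
  omega

lemma Des_finite {σ : Equiv.Perm ℕ} (h : FS σ) : (Des σ).Finite := by
  obtain ⟨n, hn⟩ := h
  exact (Set.finite_Iic n).subset (Des_sub hn)

lemma R_decomp {σ : Equiv.Perm ℕ} (h : FS σ) (hne : σ ≠ 1) :
    R σ = ⋃ i ∈ Des σ, (fun u => u ++ [i]) '' R (σ * s i) := by
  have hfin := FS_invSet_finite h
  ext w
  simp only [Set.mem_iUnion, Set.mem_image, exists_prop]
  constructor
  · intro hw
    have hwne : w ≠ [] := by
      rintro rfl
      have : π ([] : List ℕ) = σ := hw.1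
      rw [pi_nil] at this
      exact hne this.symm
    obtain ⟨u, i, rfl⟩ := List.eq_nil_or_concat w |>.resolve_left hwne
    rw [List.concat_eq_append] at hw ⊢
    obtain ⟨hu, hd⟩ := (reduced_append_iff hfin u i).1 hw
    exact ⟨i, ⟨desc_pos h hd, hd⟩, u, hu, rfl⟩
  · rintro ⟨i, ⟨hi1, hd⟩, u, hu, rfl⟩
    exact (reduced_append_iff hfin u i).2 ⟨hu, hd⟩

-- ============ CommMove machinery ============

lemma commMove_two_le {w w' : List ℕ} (h : CommMove w w') : 2 ≤ w.length := by
  obtain ⟨u, v, a, b, _, rfl, _⟩ := h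
  simp [List.length_append]
  omega

lemma dC_nil : dC ([] : List ℕ) = 0 := by
  have : {w' : List ℕ | CommMove [] w'} = ∅ := by
    ext w'; simp only [Set.mem_setOf_eq, Set.mem_empty_iff_false, iff_false]
    intro h; have := commMove_two_le h; simp at this
  unfold dC
  rw [Nat.card_eq_zero]
  left
  rw [isEmpty_subtype]
  intro w' hw'
  have := commMove_two_le hw'; simp at this

lemma commMove_split (u : List ℕ) (i : ℕ) (w' : List ℕ) :
    CommMove (u ++ [i]) w' ↔
      (∃ u', CommMove u u' ∧ w' = u' ++ [i]) ∨
      (∃ v : List ℕ, ∃ j : ℕ, u = v ++ [j] ∧ 1 < ((j : ℤ) - (i : ℤ)).natAbs ∧ w' = v ++ [i, j]) := by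
  constructor
  · rintro ⟨x, y, a, b, hab, h1, h2⟩
    rcases List.eq_nil_or_concat y with rfl | ⟨y', c, rfl⟩
    · -- y = [] : move at the end
      have h1' : u ++ [i] = (x ++ [a]) ++ [b] := by simpa using h1
      obtain ⟨hu, hib⟩ := List.append_inj' h1' rfl
      have hib' : i = b := by simpa using hib
      subst hib'
      refine Or.inr ⟨x, a, hu, hab, ?_⟩
      simpa using h2
    · -- y = y' ++ [c]
      have h1' : u ++ [i] = (x ++ a :: b :: y') ++ [c] := by simpa using h1
      obtain ⟨hu, hic⟩ := List.append_inj' h1' rfl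
      have hic' : i = c := by simpa using hic
      subst hic'
      refine Or.inl ⟨x ++ b :: a :: y', ⟨x, y', a, b, hab, hu, rfl⟩, ?_⟩
      simpa using h2
  · rintro (⟨u', ⟨x, y, a, b, hab, h1, h2⟩, rfl⟩ | ⟨v, j, rfl, hab, rfl⟩)
    · exact ⟨x, y ++ [i], a, b, hab, by simp [h1], by simp [h2]⟩
    · exact ⟨v, [], j, i, hab, by simp, by simp⟩

open Classical in
noncomputable def eaux (i : ℕ) (u : List ℕ) : ℕ :=
  if ∃ v : List ℕ, ∃ j : ℕ, u = v ++ [j] ∧ 1 < ((j : ℤ) - (i : ℤ)).natAbs then 1 else 0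

lemma eaux_nil (i : ℕ) : eaux i [] = 0 := by
  rw [eaux, if_neg]
  rintro ⟨v, j, hv, _⟩
  have := congrArg List.length hv
  simp at this

lemma eaux_concat (i : ℕ) (v : List ℕ) (j : ℕ) :
    eaux i (v ++ [j]) = if 1 < ((j : ℤ) - (i : ℤ)).natAbs then 1 else 0 := by
  rw [eaux]
  by_cases h : 1 < ((j : ℤ) - (i : ℤ)).natAbs
  · rw [if_pos ⟨v, j, rfl, h⟩, if_pos h]
  · rw [if_neg, if_neg h]
    rintro ⟨v', j', he, h'⟩
    obtain ⟨rfl, hj⟩ := List.append_inj' he rfl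
    have : j = j' := by simpa using hj
    subst this
    exact h h'

-- the set of commutation neighbours

lemma nbr_set_eq (u : List ℕ) (i : ℕ) :
    {w' : List ℕ | CommMove (u ++ [i]) w'} =
      ((fun u' => u' ++ [i]) '' {u' | CommMove u u'}) ∪
      {w' | ∃ v : List ℕ, ∃ j : ℕ, u = v ++ [j] ∧ 1 < ((j : ℤ) - (i : ℤ)).natAbs ∧ w' = v ++ [i, j]} := by
  ext w'
  rw [Set.mem_setOf_eq, commMove_split]
  simp only [Set.mem_union, Set.mem_image, Set.mem_setOf_eq]
  constructor
  · rintro (⟨u', h1, h2⟩ | h)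
    · exact Or.inl ⟨u', h1, h2.symm⟩
    · exact Or.inr h
  · rintro (⟨u', h1, h2⟩ | h)
    · exact Or.inl ⟨u', h1, h2.symm⟩
    · exact Or.inr h

lemma tail_set_eq_concat (v : List ℕ) (j i : ℕ) (h : 1 < ((j : ℤ) - (i : ℤ)).natAbs) :
    {w' : List ℕ | ∃ v' : List ℕ, ∃ j' : ℕ, v ++ [j] = v' ++ [j'] ∧
      1 < ((j' : ℤ) - (i : ℤ)).natAbs ∧ w' = v' ++ [i, j']} = {v ++ [i, j]} := by
  ext w'
  simp only [Set.mem_setOf_eq, Set.mem_singleton_iff]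
  constructor
  · rintro ⟨v', j', he, _, rfl⟩
    obtain ⟨rfl, hj⟩ := List.append_inj' he rfl
    have : j = j' := by simpa using hj
    subst this; rfl
  · rintro rfl
    exact ⟨v, j, rfl, h, rfl⟩

lemma tail_set_subsingleton (u : List ℕ) (i : ℕ) :
    {w' : List ℕ | ∃ v : List ℕ, ∃ j : ℕ, u = v ++ [j] ∧ 1 < ((j : ℤ) - (i : ℤ)).natAbs ∧
      w' = v ++ [i, j]}.Subsingleton := by
  rintro w1 ⟨v1, j1, he1, _, rfl⟩ w2 ⟨v2, j2, he2, _, rfl⟩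
  rw [he1] at he2
  obtain ⟨rfl, hj⟩ := List.append_inj' he2 rfl
  have : j1 = j2 := by simpa using hj
  subst this; rfl

lemma nbr_finite : ∀ w : List ℕ, {w' : List ℕ | CommMove w w'}.Finite := by
  intro w
  induction w using List.reverseRecOn with
  | nil =>
    apply Set.Finite.subset (Set.finite_empty)
    intro w' hw'
    have := commMove_two_le hw'; simp at this
  | append_singleton u i ih =>
    rw [nbr_set_eq]
    exact (ih.image _).union ((tail_set_subsingleton u i).finite)

lemma dC_eq_ncard (w : List ℕ) : dC w = {w' | CommMove w w'}.ncard := by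
  rw [← Nat.card_coe_set_eq]; rfl

lemma dC_concat (u : List ℕ) (i : ℕ) : dC (u ++ [i]) = dC u + eaux i u := by
  rw [dC_eq_ncard, dC_eq_ncard, nbr_set_eq]
  have hdisj : Disjoint ((fun u' => u' ++ [i]) '' {u' | CommMove u u'})
      {w' | ∃ v : List ℕ, ∃ j : ℕ, u = v ++ [j] ∧ 1 < ((j : ℤ) - (i : ℤ)).natAbs ∧ w' = v ++ [i, j]} := by
    rw [Set.disjoint_left]
    rintro w' ⟨u', _, rfl⟩ ⟨v, j, _, hab, he⟩
    have he' : u' ++ [i] = (v ++ [i]) ++ [j] := by simpa using he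
    obtain ⟨_, hij⟩ := List.append_inj' he' rfl
    have : i = j := by simpa using hij
    omega
  rw [Set.ncard_union_eq hdisj ((nbr_finite u).image _) ((tail_set_subsingleton u i).finite)]
  congr 1
  · exact Set.ncard_image_of_injective _ (List.append_left_injective [i])
  · rcases List.eq_nil_or_concat u with rfl | ⟨v, j, rfl⟩
    · rw [eaux_nil]
      convert Set.ncard_empty (List ℕ)
      ext w'
      simp only [Set.mem_setOf_eq, Set.mem_empty_iff_false, iff_false]
      rintro ⟨v, j, hv, _⟩
      have := congrArg List.length hv; simp at this
    · rw [List.concat_eq_append, eaux_concat]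
      by_cases h : 1 < ((j : ℤ) - (i : ℤ)).natAbs
      · rw [if_pos h, tail_set_eq_concat v j i h, Set.ncard_singleton]
      · rw [if_neg h]
        convert Set.ncard_empty (List ℕ)
        ext w'
        simp only [Set.mem_setOf_eq, Set.mem_empty_iff_false, iff_false]
        rintro ⟨v', j', he, h', _⟩
        obtain ⟨rfl, hj⟩ := List.append_inj' he rfl
        have : j = j' := by simpa using hj
        subst this
        exact h h'

-- ============ summation machinery ============

lemma finsum_R_decomp {σ : Equiv.Perm ℕ} (h : FS σ) (hne : σ ≠ 1) (f : List ℕ → ℕ) :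
    ∑ᶠ w ∈ R σ, f w = ∑ᶠ i ∈ Des σ, ∑ᶠ u ∈ R (σ * s i), f (u ++ [i]) := by
  have hdisj : (Des σ).PairwiseDisjoint (fun i => (fun u => u ++ [i]) '' R (σ * s i)) := by
    intro i _ j _ hij
    refine Set.disjoint_left.mpr ?_
    rintro x ⟨u, _, rfl⟩ ⟨v, _, he⟩
    obtain ⟨_, hj⟩ := List.append_inj' he rfl
    have : j = i := by simpa using hj
    exact hij this.symm
  rw [R_decomp h hne,
    finsum_mem_biUnion hdisj (Des_finite h)
      (fun i hi => (R_finite (FS_mul_s h hi.1)).image _)]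
  apply finsum_mem_congr rfl
  intro i _
  exact finsum_mem_image (fun x _ y _ hxy => List.append_left_injective [i] hxy)

lemma finsum_mem_const_nat {S : Set (List ℕ)} (hS : S.Finite) (c : ℕ) :
    ∑ᶠ v ∈ S, c = Nat.card S * c := by
  rw [finsum_mem_eq_finite_toFinset_sum _ hS, Finset.sum_const, smul_eq_mul,
    Nat.card_coe_set_eq, Set.ncard_eq_toFinset_card S hS]

lemma finsum_mem_sep {st : Set ℕ} (hfin : st.Finite) (p : ℕ → Prop) [DecidablePred p]
    (f : ℕ → ℕ) :
    ∑ᶠ j ∈ st, (if p j then f j else 0) = ∑ᶠ j ∈ {x : ℕ | x ∈ st ∧ p x}, f j := by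
  have hco : ({x : ℕ | x ∈ st ∧ p x} : Set ℕ) = ↑(hfin.toFinset.filter p) := by
    ext x; simp [Set.Finite.mem_toFinset]
  rw [hco, finsum_mem_coe_finset, Finset.sum_filter,
    finsum_mem_eq_finite_toFinset_sum _ hfin]

lemma Des_one : Des (1 : Equiv.Perm ℕ) = ∅ := by
  ext i; simp [Des]

lemma s_comm {i j : ℕ} (h : 1 < ((j : ℤ) - (i : ℤ)).natAbs) : s i * s j = s j * s i := by
  apply Equiv.ext
  intro m
  simp only [Equiv.Perm.mul_apply, s_apply]
  split_ifs <;> omega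

lemma far_desc_iff {σ : Equiv.Perm ℕ} {i j : ℕ} (h : 1 < ((j : ℤ) - (i : ℤ)).natAbs) :
    (σ * s i) (j + 1) < (σ * s i) j ↔ σ (j + 1) < σ j := by
  have h1 : s i j = j := by rw [s_apply]; split_ifs <;> omega
  have h2 : s i (j + 1) = j + 1 := by rw [s_apply]; split_ifs <;> omega
  simp only [Equiv.Perm.mul_apply, h1, h2]

lemma far_Des_iff {σ : Equiv.Perm ℕ} {i j : ℕ} (h : 1 < ((j : ℤ) - (i : ℤ)).natAbs) :
    j ∈ Des (σ * s i) ↔ j ∈ Des σ := by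
  simp only [Des, Set.mem_setOf_eq]
  rw [far_desc_iff h]

lemma finsum_eaux {τ : Equiv.Perm ℕ} (h : FS τ) (i : ℕ) :
    ∑ᶠ u ∈ R τ, eaux i u =
      ∑ᶠ j ∈ {x : ℕ | x ∈ Des τ ∧ 1 < ((x : ℤ) - (i : ℤ)).natAbs},
        Nat.card (R (τ * s j)) := by
  by_cases hτ : τ = 1
  · subst hτ
    rw [R_one, finsum_mem_singleton, eaux_nil]
    have : {x : ℕ | x ∈ Des (1 : Equiv.Perm ℕ) ∧ 1 < ((x : ℤ) - (i : ℤ)).natAbs} = ∅ := by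
      rw [Des_one]; ext x; simp
    rw [this, finsum_mem_empty]
  · rw [finsum_R_decomp h hτ (eaux i)]
    have hstep : ∀ j ∈ Des τ, ∑ᶠ v ∈ R (τ * s j), eaux i (v ++ [j]) =
        (if 1 < ((j : ℤ) - (i : ℤ)).natAbs then Nat.card (R (τ * s j)) else 0) := by
      intro j hj
      have h1 : ∑ᶠ v ∈ R (τ * s j), eaux i (v ++ [j]) =
          ∑ᶠ v ∈ R (τ * s j), (if 1 < ((j : ℤ) - (i : ℤ)).natAbs then 1 else 0) :=
        finsum_mem_congr rfl (fun v _ => eaux_concat i v j)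
      rw [h1]
      by_cases hc : 1 < ((j : ℤ) - (i : ℤ)).natAbs
      · simp only [if_pos hc]
        rw [finsum_mem_const_nat (R_finite (FS_mul_s h hj.1)) 1, mul_one]
      · simp only [if_neg hc]
        exact finsum_mem_zero ..
    rw [finsum_mem_congr rfl hstep]
    exact finsum_mem_sep (Des_finite h) _ _

-- ============ main theorem ============

lemma mul_s_s_comm (σ : Equiv.Perm ℕ) {i j : ℕ} (h : 1 < ((j : ℤ) - (i : ℤ)).natAbs) :
    σ * s i * s j = σ * s j * s i := by
  rw [mul_assoc, mul_assoc, s_comm h]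


/-- recursion for the total commutation degree:
`Σ_{w ∈ R σ} d_C^{G(σ)}(w) = Σ_{i ∈ Des σ} Σ_{u ∈ R(σ s_i)} d_C^{G(σ s_i)}(u)
+ 2 Σ_{{i,j} ⊆ Des σ, j - i > 1} |R(σ s_i s_j)|`, the last sum over unordered pairs
of descents differing by more than 1 (represented by ordered pairs `i < j`). -/
theorem statement_5 (n : ℕ) (σ : Equiv.Perm ℕ) (hσ : σ ∈ Sn n) :
    ∑ᶠ w ∈ R σ, dC w =
      (∑ᶠ i ∈ Des σ, ∑ᶠ u ∈ R (σ * s i), dC u) +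
      2 * ∑ᶠ p ∈ {p : ℕ × ℕ | p.1 ∈ Des σ ∧ p.2 ∈ Des σ ∧ p.1 + 1 < p.2},
            Nat.card (R (σ * s p.1 * s p.2)) := by
  classical
  have hFS : FS σ := ⟨n, hσ⟩
  by_cases hone : σ = 1
  · subst hone
    rw [R_one, finsum_mem_singleton, dC_nil, Des_one, finsum_mem_empty]
    have : {p : ℕ × ℕ | p.1 ∈ (∅ : Set ℕ) ∧ p.2 ∈ (∅ : Set ℕ) ∧ p.1 + 1 < p.2} = ∅ := by
      ext p; simp
    rw [this, finsum_mem_empty]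
    norm_num
  · -- main case
    have hD := Des_finite hFS
    have step1 : ∑ᶠ w ∈ R σ, dC w =
        (∑ᶠ i ∈ Des σ, ∑ᶠ u ∈ R (σ * s i), dC u) +
        ∑ᶠ i ∈ Des σ, ∑ᶠ u ∈ R (σ * s i), eaux i u := by
      rw [finsum_R_decomp hFS hone dC, ← finsum_mem_add_distrib hD]
      apply finsum_mem_congr rfl
      intro i hi
      have h1 : ∑ᶠ u ∈ R (σ * s i), dC (u ++ [i]) =
          ∑ᶠ u ∈ R (σ * s i), (dC u + eaux i u) :=
        finsum_mem_congr rfl (fun u _ => dC_concat u i)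
      rw [h1, finsum_mem_add_distrib (R_finite (FS_mul_s hFS hi.1))]
    rw [step1]
    congr 1
    -- second part
    have step2 : ∀ i ∈ Des σ, ∑ᶠ u ∈ R (σ * s i), eaux i u =
        ∑ᶠ j ∈ {x : ℕ | x ∈ Des σ ∧ 1 < ((x : ℤ) - (i : ℤ)).natAbs},
          Nat.card (R (σ * s i * s j)) := by
      intro i hi
      rw [finsum_eaux (FS_mul_s hFS hi.1) i]
      apply finsum_mem_congr
      · ext x
        simp only [Set.mem_setOf_eq, and_congr_left_iff]
        intro hfar
        exact far_Des_iff hfar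
      · intro x _; rfl
    rw [finsum_mem_congr rfl step2]
    -- convert to finsets
    set D : Finset ℕ := hD.toFinset with hDdef
    have hmemD : ∀ x, x ∈ D ↔ x ∈ Des σ := fun x => hD.mem_toFinset
    set F : ℕ → ℕ → ℕ := fun i j => Nat.card (R (σ * s i * s j)) with hF
    have inner_eq : ∀ i : ℕ,
        ∑ᶠ j ∈ {x : ℕ | x ∈ Des σ ∧ 1 < ((x : ℤ) - (i : ℤ)).natAbs}, F i j =
          ∑ j ∈ D.filter (fun x : ℕ => 1 < ((x : ℤ) - (i : ℤ)).natAbs), F i j := by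
      intro i
      rw [← finsum_mem_coe_finset]
      apply finsum_mem_congr _ (fun x _ => rfl)
      ext x
      simp only [Finset.coe_filter, Set.mem_setOf_eq, hmemD]
    rw [finsum_mem_congr rfl (fun i _ => inner_eq i),
      finsum_mem_eq_finite_toFinset_sum _ hD]
    have pair_eq : {p : ℕ × ℕ | p.1 ∈ Des σ ∧ p.2 ∈ Des σ ∧ p.1 + 1 < p.2} =
        ↑((D ×ˢ D).filter (fun p => p.1 + 1 < p.2)) := by
      ext p
      simp only [Set.mem_setOf_eq, Finset.coe_filter, Finset.mem_product, hmemD]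
      tauto
    rw [pair_eq, finsum_mem_coe_finset]
    -- now pure Finset identity
    have hsplit : ∀ i ∈ D, ∑ j ∈ D.filter (fun x : ℕ => 1 < ((x : ℤ) - (i : ℤ)).natAbs), F i j
        = (∑ j ∈ D, if i + 1 < j then F i j else 0)
          + ∑ j ∈ D, if j + 1 < i then F i j else 0 := by
      intro i _
      rw [Finset.sum_filter, ← Finset.sum_add_distrib]
      apply Finset.sum_congr rfl
      intro j _
      by_cases h1 : i + 1 < j
      · rw [if_pos (by omega), if_pos h1, if_neg (by omega), add_zero]
      · by_cases h2 : j + 1 < i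
        · rw [if_pos (by omega), if_neg h1, if_pos h2, zero_add]
        · rw [if_neg (by omega), if_neg h1, if_neg h2, add_zero]
    rw [Finset.sum_congr rfl hsplit, Finset.sum_add_distrib]
    have hswap : (∑ i ∈ D, ∑ j ∈ D, if j + 1 < i then F i j else 0)
        = ∑ i ∈ D, ∑ j ∈ D, if i + 1 < j then F i j else 0 := by
      rw [Finset.sum_comm]
      apply Finset.sum_congr rfl
      intro j _
      apply Finset.sum_congr rfl
      intro i _
      by_cases h : j + 1 < i
      · rw [if_pos h, if_pos h]
        have hfar : 1 < ((i : ℤ) - (j : ℤ)).natAbs := by omega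
        simp only [hF]
        rw [mul_s_s_comm σ hfar]
      · rw [if_neg h, if_neg h]
    rw [hswap, two_mul]
    have hA : (∑ i ∈ D, ∑ j ∈ D, if i + 1 < j then F i j else 0)
        = ∑ p ∈ (D ×ˢ D).filter (fun p => p.1 + 1 < p.2), F p.1 p.2 := by
      rw [Finset.sum_filter, Finset.sum_product]
    rw [hA]

end RW
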